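/- Let θ₀, η, β ∈ S^{d−1} with |η − θ₀| ≤ 1/2 and |β − θ₀| ≤ 1/2, η ≠ θ₀, β ≠ θ₀, and suppose θ₀ᵀη ≠ 1 and θ₀ᵀβ ≠ 1. Define η_p := (θ₀ − η(θ₀ᵀη))/|θ₀ − η(θ₀ᵀη)| and β_p analogously. Then |η_p − β_p| ≤ (16/√15)·|η − β| / (|η − θ₀| + |β − θ₀|). -/
import Mathlib


open scoped RealInnerProductSpace

private lemma radial_aux {E : Type*} [NormedAddCommGroup E] [InnerProductSpace ℝ E]
    (u v : E) (hu : u ≠ 0) (hv : v ≠ 0) :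
    ‖‖u‖⁻¹ • u - ‖v‖⁻¹ • v‖ ≤ 2 * ‖u - v‖ / (‖u‖ + ‖v‖) := by
  set a := ‖u‖ with ha
  set b := ‖v‖ with hb
  have hapos : 0 < a := norm_pos_iff.mpr hu
  have hbpos : 0 < b := norm_pos_iff.mpr hv
  set t := ⟪u, v⟫ with hts
  have ht : -(a * b) ≤ t := by
    have h1 := abs_real_inner_le_norm u v
    have h2 := neg_abs_le t
    linarith
  set w := ‖u‖⁻¹ • u - ‖v‖⁻¹ • v with hw
  have hw2 : ‖w‖ ^ 2 * (a * b) = 2 * (a * b) - 2 * t := by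
    have n1 : ‖(‖u‖)⁻¹ • u‖ = 1 := by
      rw [norm_smul, Real.norm_eq_abs, abs_inv, abs_of_pos hapos,
        inv_mul_cancel₀ (ne_of_gt hapos)]
    have n2 : ‖(‖v‖)⁻¹ • v‖ = 1 := by
      rw [norm_smul, Real.norm_eq_abs, abs_inv, abs_of_pos hbpos,
        inv_mul_cancel₀ (ne_of_gt hbpos)]
    have e : ‖w‖ ^ 2 = 1 - 2 * (a⁻¹ * (b⁻¹ * t)) + 1 := by
      rw [hw, @norm_sub_sq_real, n1, n2, real_inner_smul_left, real_inner_smul_right]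
      ring
    rw [e]
    field_simp
    ring
  have h1 : ‖u - v‖ ^ 2 = a ^ 2 - 2 * t + b ^ 2 := by
    rw [@norm_sub_sq_real]
    try ring
  rw [le_div_iff₀ (by positivity)]
  have hab : 0 < a * b := mul_pos hapos hbpos
  have key : (‖w‖ * (a + b)) ^ 2 * (a * b) ≤ (2 * ‖u - v‖) ^ 2 * (a * b) := by
    nlinarith [mul_nonneg (by linarith : (0:ℝ) ≤ t + a * b) (sq_nonneg (a - b)),
      sq_nonneg (a + b), sq_nonneg ‖w‖]
  have key2 : (‖w‖ * (a + b)) ^ 2 ≤ (2 * ‖u - v‖) ^ 2 :=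
    le_of_mul_le_mul_right key hab
  have := Real.sqrt_le_sqrt key2
  rwa [Real.sqrt_sq (by positivity), Real.sqrt_sq (by positivity)] at this

private lemma lower_aux {d : ℕ} (θ₀ η : EuclideanSpace ℝ (Fin d))
    (h₀ : ‖θ₀‖ = 1) (hη : ‖η‖ = 1) (hc : ‖η - θ₀‖ ≤ 1 / 2) :
    Real.sqrt 15 / 4 * ‖η - θ₀‖ ≤ ‖θ₀ - ⟪θ₀, η⟫ • η‖ := by
  set s := ⟪θ₀, η⟫ with hs
  set p := ‖η - θ₀‖ with hp
  have hp0 : 0 ≤ p := norm_nonneg _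
  have h1 : p ^ 2 = 2 - 2 * s := by
    rw [hp, @norm_sub_sq_real, real_inner_comm, ← hs, hη, h₀]; ring
  have h2 : ‖θ₀ - s • η‖ ^ 2 = 1 - s ^ 2 := by
    rw [@norm_sub_sq_real, real_inner_smul_right, norm_smul, hη, h₀, ← hs,
      Real.norm_eq_abs, mul_one, sq_abs]
    ring
  have hs1 : s ≤ 1 := by nlinarith [sq_nonneg p]
  have hs78 : 7 / 8 ≤ s := by nlinarith
  have h15 : Real.sqrt 15 ^ 2 = 15 := Real.sq_sqrt (by norm_num)
  have hsq : (Real.sqrt 15 / 4 * p) ^ 2 ≤ ‖θ₀ - s • η‖ ^ 2 := by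
    rw [h2]
    have : (Real.sqrt 15 / 4 * p) ^ 2 = 15 / 16 * p ^ 2 := by
      rw [mul_pow, div_pow, h15]; ring
    rw [this, h1]
    nlinarith [mul_nonneg (by linarith : (0:ℝ) ≤ 1 - s) (by linarith : (0:ℝ) ≤ s - 7/8)]
  have := Real.sqrt_le_sqrt hsq
  rwa [Real.sqrt_sq (by positivity), Real.sqrt_sq (by positivity)] at this

private lemma diff_aux {d : ℕ} (θ₀ η β : EuclideanSpace ℝ (Fin d))
    (h₀ : ‖θ₀‖ = 1) (hη : ‖η‖ = 1) (hβ : ‖β‖ = 1) :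
    ‖(θ₀ - ⟪θ₀, η⟫ • η) - (θ₀ - ⟪θ₀, β⟫ • β)‖ ≤ 2 * ‖η - β‖ := by
  set s := ⟪θ₀, η⟫ with hs
  set r := ⟪θ₀, β⟫ with hr
  have he : (θ₀ - s • η) - (θ₀ - r • β) = r • (β - η) + (r - s) • η := by
    module
  have hrs : |r - s| ≤ ‖β - η‖ := by
    have : r - s = ⟪θ₀, β - η⟫ := by rw [inner_sub_right]
    rw [this]
    calc |⟪θ₀, β - η⟫| ≤ ‖θ₀‖ * ‖β - η‖ := abs_real_inner_le_norm _ _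
      _ = ‖β - η‖ := by rw [h₀, one_mul]
  have hr1 : |r| ≤ 1 := by
    have := abs_real_inner_le_norm θ₀ β
    rwa [h₀, hβ, one_mul] at this
  calc ‖(θ₀ - s • η) - (θ₀ - r • β)‖ = ‖r • (β - η) + (r - s) • η‖ := by rw [he]
    _ ≤ ‖r • (β - η)‖ + ‖(r - s) • η‖ := norm_add_le _ _
    _ = |r| * ‖β - η‖ + |r - s| * ‖η‖ := by rw [norm_smul, norm_smul]; rfl
    _ ≤ 1 * ‖β - η‖ + ‖β - η‖ * 1 := by
        gcongr <;> simp [hη, hrs, hr1]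
    _ = 2 * ‖η - β‖ := by rw [norm_sub_rev]; ring

/-- Lipschitz estimate for the map `θ ↦ θ_p := (θ₀ - (θ₀ᵀθ)θ)/|θ₀ - (θ₀ᵀθ)θ|` near `θ₀`:
`|η_p - β_p| ≤ (16/√15)|η - β|/(|η - θ₀| + |β - θ₀|)`. -/
theorem stmt11 {d : ℕ} (θ₀ η β : EuclideanSpace ℝ (Fin d))
    (h₀ : ‖θ₀‖ = 1) (hη : ‖η‖ = 1) (hβ : ‖β‖ = 1)
    (hηc : ‖η - θ₀‖ ≤ 1 / 2) (hβc : ‖β - θ₀‖ ≤ 1 / 2)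
    (hη₀ : η ≠ θ₀) (hβ₀ : β ≠ θ₀)
    (hη1 : ⟪θ₀, η⟫ ≠ 1) (hβ1 : ⟪θ₀, β⟫ ≠ 1) :
    ‖‖θ₀ - ⟪θ₀, η⟫ • η‖⁻¹ • (θ₀ - ⟪θ₀, η⟫ • η)
        - ‖θ₀ - ⟪θ₀, β⟫ • β‖⁻¹ • (θ₀ - ⟪θ₀, β⟫ • β)‖
      ≤ (16 / Real.sqrt 15) * ‖η - β‖ / (‖η - θ₀‖ + ‖β - θ₀‖) := by
  set u := θ₀ - ⟪θ₀, η⟫ • η with hu'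
  set v := θ₀ - ⟪θ₀, β⟫ • β with hv'
  set p := ‖η - θ₀‖ with hp'
  set q := ‖β - θ₀‖ with hq'
  have hppos : 0 < p := norm_pos_iff.mpr (sub_ne_zero.mpr hη₀)
  have hqpos : 0 < q := norm_pos_iff.mpr (sub_ne_zero.mpr hβ₀)
  have h15 : (0:ℝ) < Real.sqrt 15 := Real.sqrt_pos.mpr (by norm_num)
  have hlu : Real.sqrt 15 / 4 * p ≤ ‖u‖ := lower_aux θ₀ η h₀ hη hηc
  have hlv : Real.sqrt 15 / 4 * q ≤ ‖v‖ := lower_aux θ₀ β h₀ hβ hβc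
  have hunz : u ≠ 0 := by
    intro h
    rw [h, norm_zero] at hlu
    nlinarith
  have hvnz : v ≠ 0 := by
    intro h
    rw [h, norm_zero] at hlv
    nlinarith
  have hrad := radial_aux u v hunz hvnz
  have hdiff : ‖u - v‖ ≤ 2 * ‖η - β‖ := diff_aux θ₀ η β h₀ hη hβ
  have hden : Real.sqrt 15 / 4 * (p + q) ≤ ‖u‖ + ‖v‖ := by
    have : Real.sqrt 15 / 4 * (p + q) = Real.sqrt 15 / 4 * p + Real.sqrt 15 / 4 * q := by ring
    rw [this]; exact add_le_add hlu hlv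
  have hstep : 2 * ‖u - v‖ / (‖u‖ + ‖v‖) ≤ 4 * ‖η - β‖ / (Real.sqrt 15 / 4 * (p + q)) := by
    apply div_le_div₀ (by positivity) (by linarith) (by positivity) hden
  have heq : 4 * ‖η - β‖ / (Real.sqrt 15 / 4 * (p + q))
      = 16 / Real.sqrt 15 * ‖η - β‖ / (p + q) := by
    field_simp
    ring
  calc ‖‖u‖⁻¹ • u - ‖v‖⁻¹ • v‖ ≤ 2 * ‖u - v‖ / (‖u‖ + ‖v‖) := hrad
    _ ≤ 4 * ‖η - β‖ / (Real.sqrt 15 / 4 * (p + q)) := hstep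
    _ = 16 / Real.sqrt 15 * ‖η - β‖ / (p + q) := heq
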